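/- Let H be a compact Hausdorff topological group. Then the linear span of {Δ(f)·(1 ⊗ g) : f, g ∈ C(H)}, i.e. of the functions (x,y) ↦ f(xy)g(y), is dense in C(H × H, ℂ) with the uniform norm. -/

import Mathlib

open scoped ComplexConjugate

/-- For a compact Hausdorff topological group `H`, the linear span of the
functions `(x, y) ↦ f (x * y) * g y` (i.e. `Δ(f) · (1 ⊗ g)` for `f, g ∈ C(H)`) is
dense in `C(H × H, ℂ)` with the uniform norm. -/
theorem dense_span_comult_mul_right (H : Type*) [TopologicalSpace H] [Group H]
    [IsTopologicalGroup H] [CompactSpace H] [T2Space H] :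
    Dense (Submodule.span ℂ
      {F : C(H × H, ℂ) | ∃ f g : C(H, ℂ), ∀ x y : H, F (x, y) = f (x * y) * g y} :
      Set C(H × H, ℂ)) := by
  set S : Set C(H × H, ℂ) :=
    {F : C(H × H, ℂ) | ∃ f g : C(H, ℂ), ∀ x y : H, F (x, y) = f (x * y) * g y} with hS
  -- `S` is closed under multiplication, contains `1`, and is star-closed.
  have hone : (1 : C(H × H, ℂ)) ∈ S := ⟨1, 1, by simp⟩
  have hmul : ∀ F ∈ S, ∀ G ∈ S, F * G ∈ S := by
    rintro F ⟨f₁, g₁, hF⟩ G ⟨f₂, g₂, hG⟩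
    exact ⟨f₁ * f₂, g₁ * g₂, fun x y => by
      simp [hF x y, hG x y, mul_mul_mul_comm]⟩
  have hstar : star S = S := by
    have key : ∀ F ∈ S, star F ∈ S := by
      rintro F ⟨f, g, hF⟩
      exact ⟨star f, star g, fun x y => by
        simp [hF x y, map_mul]⟩
    apply Set.Subset.antisymm
    · intro F hF
      have := key (star F) hF
      simpa using this
    · intro F hF
      have := key F hF
      simpa [Set.mem_star] using this
  -- `S` as a submonoid
  let M : Submonoid C(H × H, ℂ) :=
    { carrier := S, one_mem' := hone, mul_mem' := fun ha hb => hmul _ ha _ hb }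
  -- C(H, ℂ) separates points of H
  have sep : ∀ b d : H, b ≠ d → ∃ g : C(H, ℂ), g b ≠ g d := by
    intro b d hbd
    obtain ⟨f, hf0, hf1, -⟩ := exists_continuous_zero_one_of_isClosed
      (isClosed_singleton (x := b)) (isClosed_singleton (x := d))
      (by simpa using hbd)
    refine ⟨(⟨Complex.ofReal, Complex.continuous_ofReal⟩ : C(ℝ, ℂ)).comp f, ?_⟩
    simp only [ContinuousMap.comp_apply, ContinuousMap.coe_mk,
      hf0 (Set.mem_singleton b), hf1 (Set.mem_singleton d)]
    norm_num
  -- The star subalgebra generated by `S` separates points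
  have hsep : (StarAlgebra.adjoin ℂ S).SeparatesPoints := by
    rintro ⟨a, b⟩ ⟨c, d⟩ hne
    by_cases hbd : b = d
    · subst hbd
      have hac : a * b ≠ c * b := by
        intro h
        exact hne (by simp [mul_right_cancel h])
      obtain ⟨f, hf⟩ := sep _ _ hac
      refine ⟨_, ⟨⟨f.comp ⟨fun p => p.1 * p.2, by continuity⟩,
        StarAlgebra.subset_adjoin ℂ S ⟨f, 1, fun x y => by simp⟩, rfl⟩, ?_⟩⟩
      simpa using hf
    · obtain ⟨g, hg⟩ := sep _ _ hbd
      refine ⟨_, ⟨⟨g.comp ⟨Prod.snd, continuous_snd⟩,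
        StarAlgebra.subset_adjoin ℂ S ⟨1, g, fun x y => by simp⟩, rfl⟩, ?_⟩⟩
      simpa using hg
  -- Stone–Weierstrass: the adjoined star subalgebra is dense
  have htop := ContinuousMap.starSubalgebra_topologicalClosure_eq_top_of_separatesPoints
    (StarAlgebra.adjoin ℂ S) hsep
  have hdense : Dense ((StarAlgebra.adjoin ℂ S : Set C(H × H, ℂ))) := by
    have := congrArg (fun (A : StarSubalgebra ℂ C(H × H, ℂ)) => (A : Set C(H × H, ℂ))) htop
    simp only [StarSubalgebra.topologicalClosure_coe] at this
    rw [dense_iff_closure_eq]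
    simpa using this
  -- The adjoined star subalgebra is contained in the span of `S`
  have hsub : (StarAlgebra.adjoin ℂ S : Set C(H × H, ℂ)) ⊆
      (Submodule.span ℂ S : Set C(H × H, ℂ)) := by
    intro F hF
    have : F ∈ Subalgebra.toSubmodule (StarAlgebra.adjoin ℂ S).toSubalgebra := hF
    rw [StarAlgebra.adjoin_eq_span] at this
    rw [hstar, Set.union_self] at this
    have hcl : Submonoid.closure S = M := Submonoid.closure_eq M
    rw [hcl] at this
    exact this
  exact hdense.mono hsub
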